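/- Suppose g : ℕ → ℂ is multiplicative and satisfies Condition (A) for some complex number κ, Condition (B), and Condition (C) with some β ≥ 0. Then for all x ≥ 2, M_g(x) log x − (κ+1) ∫_2^x M_g(t) t^{−1} dt ≪_g (log x)^β. -/

import Mathlib

open Filter Finset
open scoped ENNReal NNReal

/-- `g` is multiplicative: `g 1 = 1` and `g (m*n) = g m * g n` for coprime `m, n`. -/
def IsMult (g : ℕ → ℂ) : Prop :=
  g 1 = 1 ∧ ∀ m n : ℕ, Nat.Coprime m n → g (m * n) = g m * g n

/-- `M_g(x) = ∑_{n ≤ x} g(n)/n`. -/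
noncomputable def Mg (g : ℕ → ℂ) (x : ℝ) : ℂ :=
  ∑ n ∈ Finset.Icc 1 ⌊x⌋₊, g n / (n : ℂ)

/-- The finite set of primes `p ≤ x`. -/
noncomputable def primesLE (x : ℝ) : Finset ℕ :=
  (Finset.range (⌊x⌋₊ + 1)).filter Nat.Prime

/-- Condition (A): `∑_{p ≤ x} g(p) log p / p = κ log x + O(1)` for all `x ≥ 2`. -/
def CondA (g : ℕ → ℂ) (κ : ℂ) : Prop :=
  ∃ C : ℝ, ∀ x : ℝ, 2 ≤ x →
    ‖(∑ p ∈ primesLE x, g p * (Real.log p : ℂ) / (p : ℂ)) - κ * (Real.log x : ℂ)‖ ≤ C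

/-- Condition (B):
`∑_p (|g(p)| log p / p) ∑_{r≥1} |g(p^r)|/p^r + ∑_p ∑_{r≥2} |g(p^r)| log(p^r)/p^r < ∞`. -/
def CondB (g : ℕ → ℂ) : Prop :=
  (∑' p : Nat.Primes,
      ((‖g (p : ℕ)‖₊ : ℝ≥0∞) * ENNReal.ofReal (Real.log (p : ℕ)) / ((p : ℕ) : ℝ≥0∞)) *
        ∑' r : ℕ, (‖g ((p : ℕ) ^ (r + 1))‖₊ : ℝ≥0∞) / (((p : ℕ) ^ (r + 1) : ℕ) : ℝ≥0∞))
    + (∑' p : Nat.Primes, ∑' r : ℕ,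
        (‖g ((p : ℕ) ^ (r + 2))‖₊ : ℝ≥0∞) *
          ENNReal.ofReal (Real.log ((p : ℕ) ^ (r + 2) : ℕ)) /
          (((p : ℕ) ^ (r + 2) : ℕ) : ℝ≥0∞)) < ⊤

/-- Condition (C): `∏_{p ≤ x} (1 + |g(p)|/p) ≪ (log x)^β` for all `x ≥ 2`. -/
def CondC (g : ℕ → ℂ) (β : ℝ) : Prop :=
  ∃ C : ℝ, ∀ x : ℝ, 2 ≤ x →
    ∏ p ∈ primesLE x, (1 + ‖g p‖ / (p : ℝ)) ≤ C * Real.log x ^ β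

/-- The Euler factor `(1 - 1/p)^κ (1 + g(p)/p + g(p²)/p² + ⋯)` (principal branch power). -/
noncomputable def eulerFactor (g : ℕ → ℂ) (κ : ℂ) (p : ℕ) : ℂ :=
  (1 - 1 / (p : ℂ)) ^ κ * ∑' r : ℕ, g (p ^ r) / (p : ℂ) ^ r


lemma primesLE_eq (x : ℝ) : primesLE x = (⌊x⌋₊ + 1).primesBelow := rfl

lemma mem_primesLE {x : ℝ} (hx : 0 ≤ x) {p : ℕ} :
    p ∈ primesLE x ↔ p.Prime ∧ (p : ℝ) ≤ x := by
  simp only [primesLE, mem_filter, mem_range, Nat.lt_succ_iff, Nat.le_floor_iff hx]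
  tauto

lemma mem_IccN {x : ℝ} (hx : 0 ≤ x) {n : ℕ} :
    n ∈ Finset.Icc 1 ⌊x⌋₊ ↔ 1 ≤ n ∧ (n : ℝ) ≤ x := by
  simp only [mem_Icc, Nat.le_floor_iff hx]

lemma integral_Mg (g : ℕ → ℂ) {x : ℝ} (hx : 2 ≤ x) :
    ∫ t in (2:ℝ)..x, Mg g t / (t:ℂ)
      = (∑ n ∈ Finset.Icc 1 ⌊x⌋₊, g n / (n:ℂ) * (Real.log (x / n) : ℂ))
        - (Real.log 2 : ℂ) * g 1 := by
  have hx0 : (0:ℝ) ≤ x := by linarith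
  set N := ⌊x⌋₊ with hN
  have hN2 : 2 ≤ N := Nat.le_floor (by exact_mod_cast hx)
  set F : ℕ → ℝ → ℂ :=
    fun n t => (Set.Ioi (n:ℝ)).indicator (fun t => ((t⁻¹ : ℝ) : ℂ) * (g n / n)) t with hF
  have hstep : ∫ t in (2:ℝ)..x, Mg g t / (t:ℂ)
      = ∫ t in (2:ℝ)..x, ∑ n ∈ Finset.Icc 1 N, F n t := by
    apply intervalIntegral.integral_congr_ae
    have hae : ∀ᵐ t : ℝ, t ∉ Set.range (Nat.cast : ℕ → ℝ) :=
      MeasureTheory.measure_eq_zero_iff_ae_notMem.mp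
        ((Set.countable_range _).measure_zero _)
    filter_upwards [hae] with t ht hmem
    rw [Set.uIoc_of_le hx] at hmem
    obtain ⟨ht2, htx⟩ := hmem
    have ht0 : (0:ℝ) ≤ t := by linarith
    have key : ∀ n : ℕ, ((n:ℝ) < t ↔ n ≤ ⌊t⌋₊) := by
      intro n
      constructor
      · intro h; exact Nat.le_floor h.le
      · intro h
        rcases ((Nat.le_floor_iff ht0).mp h).lt_or_eq with h' | h'
        · exact h'
        · exact absurd ⟨n, h'⟩ ht
    have hset : (Finset.Icc 1 N).filter (fun n : ℕ => (n:ℝ) < t) = Finset.Icc 1 ⌊t⌋₊ := by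
      ext m
      simp only [mem_filter, mem_Icc, key m]
      constructor
      · rintro ⟨⟨h1, _⟩, h2⟩; exact ⟨h1, h2⟩
      · rintro ⟨h1, h2⟩
        exact ⟨⟨h1, h2.trans (Nat.floor_le_floor htx)⟩, h2⟩
    have : ∑ n ∈ Finset.Icc 1 N, F n t
        = ∑ n ∈ (Finset.Icc 1 N).filter (fun n : ℕ => (n:ℝ) < t),
            ((t⁻¹ : ℝ) : ℂ) * (g n / n) := by
      rw [Finset.sum_filter]
      refine Finset.sum_congr rfl fun n _ => ?_
      simp [hF, Set.indicator_apply, Set.mem_Ioi]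
    rw [this, hset, Mg, Finset.sum_div]
    refine Finset.sum_congr rfl fun n _ => ?_
    rw [div_eq_mul_inv, mul_comm]
    norm_num
  have hint : ∀ n ∈ Finset.Icc 1 N, IntervalIntegrable (F n) MeasureTheory.volume 2 x := by
    intro n _
    rw [intervalIntegrable_iff_integrableOn_Ioc_of_le hx]
    apply MeasureTheory.IntegrableOn.indicator _ measurableSet_Ioi
    apply MeasureTheory.IntegrableOn.mono_set _ Set.Ioc_subset_Icc_self
    apply ContinuousOn.integrableOn_Icc
    apply ContinuousOn.mul
    · apply Continuous.comp_continuousOn Complex.continuous_ofReal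
      apply ContinuousOn.inv₀ continuousOn_id
      intro t ht
      simp only [Set.mem_Icc] at ht
      intro h; rw [id_eq] at h; subst h; linarith [ht.1]
    · exact continuousOn_const
  have hval : ∀ n ∈ Finset.Icc 1 N, (∫ t in (2:ℝ)..x, F n t)
      = g n / n * ((Real.log x - Real.log (max 2 (n:ℝ)) : ℝ) : ℂ) := by
    intro n hn
    obtain ⟨hn1, hnx⟩ := (mem_IccN hx0).mp hn
    have hn0 : (0:ℝ) < n := by exact_mod_cast hn1
    rw [intervalIntegral.integral_of_le hx, hF]
    rw [MeasureTheory.setIntegral_indicator measurableSet_Ioi, Set.Ioc_inter_Ioi]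
    have hax : (2 ⊔ (n:ℝ)) ≤ x := sup_le hx hnx
    rw [← intervalIntegral.integral_of_le hax]
    have ha0 : (0:ℝ) < 2 ⊔ (n:ℝ) := lt_sup_iff.mpr (Or.inl (by norm_num))
    simp_rw [mul_comm ((·⁻¹ : ℝ → ℝ) _ : ℂ) (g n / n)]
    rw [intervalIntegral.integral_const_mul, intervalIntegral.integral_ofReal,
      integral_inv_of_pos ha0 (by linarith), Real.log_div (by linarith) (ne_of_gt ha0)]
  rw [hstep, intervalIntegral.integral_finset_sum hint, Finset.sum_congr rfl hval]
  have h1mem : 1 ∈ Finset.Icc 1 N := by simp [hN2]; omega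
  have : ∀ n ∈ Finset.Icc 1 N,
      g n / n * ((Real.log x - Real.log (max 2 (n:ℝ)) : ℝ) : ℂ)
        = g n / (n:ℂ) * (Real.log (x / n) : ℂ)
          - (if n = 1 then (Real.log 2 : ℂ) * g 1 else 0) := by
    intro n hn
    obtain ⟨hn1, hnx⟩ := (mem_IccN hx0).mp hn
    rcases eq_or_lt_of_le hn1 with h1 | h2
    · subst h1
      simp only [Nat.cast_one, if_pos rfl]
      rw [max_eq_left (by norm_num), div_one, Real.log_div (by linarith) one_ne_zero,
        Real.log_one]
      push_cast
      ring
    · have hn2 : (2:ℝ) ≤ (n:ℝ) := by exact_mod_cast h2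
      rw [max_eq_right hn2, if_neg (by omega), sub_zero,
        Real.log_div (by linarith) (by positivity)]
  rw [Finset.sum_congr rfl this, Finset.sum_sub_distrib, Finset.sum_ite_eq' _ 1, if_pos h1mem]

lemma fiber_decomp {K : Type*} [Field K] (h : ℕ → K)
    (hmul : ∀ m n : ℕ, Nat.Coprime m n → h (m * n) = h m * h n)
    (w : ℕ → K) {p : ℕ} (hp : p.Prime) {x : ℝ} (hx : 0 ≤ x) :
    ∑ n ∈ Finset.Icc 1 ⌊x⌋₊, w (n.factorization p) * h n / (n : K)
      = ∑ r ∈ Finset.Icc 0 ⌊x⌋₊, w r * (h (p ^ r) / (p : K) ^ r) *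
          ∑ m ∈ (Finset.Icc 1 ⌊x / (p:ℝ) ^ r⌋₊).filter (fun m => ¬ p ∣ m),
            h m / (m : K) := by
  have hp0 : (0:ℝ) < (p:ℝ) := by exact_mod_cast hp.pos
  have hmaps : ∀ n ∈ Finset.Icc 1 ⌊x⌋₊, n.factorization p ∈ Finset.Icc 0 ⌊x⌋₊ := by
    intro n hn
    rw [mem_Icc] at hn ⊢
    exact ⟨Nat.zero_le _, le_trans (Nat.factorization_lt p (by omega)).le hn.2⟩
  rw [← Finset.sum_fiberwise_of_maps_to hmaps (fun n => w (n.factorization p) * h n / (n : K))]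
  refine Finset.sum_congr rfl fun r hr => ?_
  have key : ∑ n ∈ (Finset.Icc 1 ⌊x⌋₊).filter (fun n => n.factorization p = r), h n / (n : K)
      = (h (p ^ r) / (p : K) ^ r) *
          ∑ m ∈ (Finset.Icc 1 ⌊x / (p:ℝ) ^ r⌋₊).filter (fun m => ¬ p ∣ m), h m / (m : K) := by
    rw [Finset.mul_sum]
    refine Finset.sum_nbij' (fun n => n / p ^ r) (fun m => p ^ r * m) ?_ ?_ ?_ ?_ ?_
    · intro n hn
      simp only [mem_filter, mem_Icc] at hn
      obtain ⟨⟨hn1, hnN⟩, hvr⟩ := hn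
      have hn0 : n ≠ 0 := by omega
      have hdvd : p ^ r ∣ n := by rw [← hvr]; exact Nat.ordProj_dvd n p
      have hm0 : 0 < n / p ^ r := Nat.div_pos (Nat.le_of_dvd (by omega) hdvd) (pow_pos hp.pos r)
      have hnd : ¬ p ∣ n / p ^ r := by rw [← hvr]; exact Nat.not_dvd_ordCompl hp hn0
      simp only [mem_filter, mem_Icc]
      refine ⟨⟨hm0, Nat.le_floor ?_⟩, hnd⟩
      have hnx : (n:ℝ) ≤ x := (Nat.le_floor_iff hx).mp hnN
      rw [le_div_iff₀ (by positivity)]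
      have hcast : ((n / p ^ r : ℕ) : ℝ) * ((p:ℝ)) ^ r = (n:ℝ) := by
        exact_mod_cast congrArg (Nat.cast : ℕ → ℝ) (Nat.div_mul_cancel hdvd)
      rw [hcast]; exact hnx
    · intro m hm
      simp only [mem_filter, mem_Icc] at hm
      obtain ⟨⟨hm1, hmM⟩, hnd⟩ := hm
      have hmx : (m:ℝ) ≤ x / (p:ℝ) ^ r := (Nat.le_floor_iff (by positivity)).mp hmM
      simp only [mem_filter, mem_Icc]
      refine ⟨⟨Nat.one_le_iff_ne_zero.mpr (Nat.mul_ne_zero (pow_ne_zero r hp.pos.ne') (by omega)), Nat.le_floor ?_⟩, ?_⟩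
      · calc ((p ^ r * m : ℕ) : ℝ) = (p:ℝ) ^ r * (m:ℝ) := by push_cast; ring
          _ ≤ (p:ℝ) ^ r * (x / (p:ℝ) ^ r) := by
              exact mul_le_mul_of_nonneg_left hmx (by positivity)
          _ = x := by field_simp
      · rw [Nat.factorization_mul (pow_ne_zero r hp.pos.ne') (by omega), Finsupp.add_apply,
          hp.factorization_pow, Finsupp.single_eq_same,
          Nat.factorization_eq_zero_of_not_dvd hnd, add_zero]
    · intro n hn
      simp only [mem_filter, mem_Icc] at hn
      have hdvd : p ^ r ∣ n := by rw [← hn.2]; exact Nat.ordProj_dvd n p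
      exact Nat.mul_div_cancel' hdvd
    · intro m hm
      exact Nat.mul_div_cancel_left m (pow_pos hp.pos r)
    · intro n hn
      simp only [mem_filter, mem_Icc] at hn
      obtain ⟨⟨hn1, hnN⟩, hvr⟩ := hn
      have hn0 : n ≠ 0 := by omega
      have hdvd : p ^ r ∣ n := by rw [← hvr]; exact Nat.ordProj_dvd n p
      have hnd : ¬ p ∣ n / p ^ r := by rw [← hvr]; exact Nat.not_dvd_ordCompl hp hn0
      have hcop : Nat.Coprime (p ^ r) (n / p ^ r) :=
        Nat.Coprime.pow_left r ((Nat.Prime.coprime_iff_not_dvd hp).mpr hnd)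
      have hmn : p ^ r * (n / p ^ r) = n := Nat.mul_div_cancel' hdvd
      set m := n / p ^ r with hm
      rw [← hmn, hmul _ _ hcop, div_mul_div_comm]
      beta_reduce
      push_cast
      ring
  calc ∑ n ∈ (Finset.Icc 1 ⌊x⌋₊).filter (fun n => n.factorization p = r),
        w (n.factorization p) * h n / (n : K)
      = ∑ n ∈ (Finset.Icc 1 ⌊x⌋₊).filter (fun n => n.factorization p = r),
          w r * (h n / (n : K)) := by
        refine Finset.sum_congr rfl fun n hn => ?_
        simp only [mem_filter] at hn
        rw [hn.2, mul_div_assoc]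
    _ = w r * ∑ n ∈ (Finset.Icc 1 ⌊x⌋₊).filter (fun n => n.factorization p = r),
          h n / (n : K) := (Finset.mul_sum _ _ _).symm
    _ = _ := by rw [key]; ring

noncomputable def S1 (g : ℕ → ℂ) : ℝ≥0∞ :=
  ∑' p : Nat.Primes,
      ((‖g (p : ℕ)‖₊ : ℝ≥0∞) * ENNReal.ofReal (Real.log (p : ℕ)) / ((p : ℕ) : ℝ≥0∞)) *
        ∑' r : ℕ, (‖g ((p : ℕ) ^ (r + 1))‖₊ : ℝ≥0∞) / (((p : ℕ) ^ (r + 1) : ℕ) : ℝ≥0∞)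

noncomputable def S2 (g : ℕ → ℂ) : ℝ≥0∞ :=
  ∑' p : Nat.Primes, ∑' r : ℕ,
        (‖g ((p : ℕ) ^ (r + 2))‖₊ : ℝ≥0∞) *
          ENNReal.ofReal (Real.log ((p : ℕ) ^ (r + 2) : ℕ)) /
          (((p : ℕ) ^ (r + 2) : ℕ) : ℝ≥0∞)

/-- `ofReal` of the basic term. -/
lemma ennterm_eq (g : ℕ → ℂ) {p : ℕ} (hp : 0 < p) (k : ℕ) :
    ENNReal.ofReal (‖g (p ^ k)‖ / (p:ℝ) ^ k)
      = (‖g (p ^ k)‖₊ : ℝ≥0∞) / ((p ^ k : ℕ) : ℝ≥0∞) := by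
  rw [ENNReal.ofReal_div_of_pos (by positivity), ofReal_norm, enorm_eq_nnnorm]
  congr 1
  rw [show ((p:ℝ) ^ k) = ((p ^ k : ℕ) : ℝ) by push_cast; ring, ENNReal.ofReal_natCast]

/-- Generic: a real sum over a finset of primes is bounded by the `toReal` of
an `ℝ≥0∞` tsum over `Nat.Primes`. -/
lemma sum_primes_le_toReal {P : Finset ℕ} (hP : ∀ p ∈ P, p.Prime) (t : ℕ → ℝ)
    (Φ : Nat.Primes → ℝ≥0∞) (hΦ : ∑' p, Φ p ≠ ⊤)
    (hle : ∀ (p : ℕ) (hp : p ∈ P), ENNReal.ofReal (t p) ≤ Φ ⟨p, hP p hp⟩) :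
    ∑ p ∈ P, t p ≤ (∑' p, Φ p).toReal := by
  have h1 : ∑ p ∈ P, t p ≤ ∑ p ∈ P, (ENNReal.ofReal (t p)).toReal := by
    refine Finset.sum_le_sum fun p _ => ?_
    rcases le_or_gt 0 (t p) with h | h
    · rw [ENNReal.toReal_ofReal h]
    · rw [ENNReal.ofReal_of_nonpos h.le]; simpa using h.le
  have h2 : (∑ p ∈ P, ENNReal.ofReal (t p)) ≤ ∑' p, Φ p := by
    classical
    set s : Finset Nat.Primes :=
      P.attach.map ⟨fun p => (⟨p.1, hP p.1 p.2⟩ : Nat.Primes),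
        by
          intro a b hab
          have := congrArg (fun q : Nat.Primes => (q : ℕ)) hab
          exact Subtype.ext this⟩ with hs
    have hsum : ∑ p ∈ P, ENNReal.ofReal (t p) ≤ ∑ q ∈ s, Φ q := by
      rw [← Finset.sum_attach P (fun p => ENNReal.ofReal (t p)), hs, Finset.sum_map]
      refine Finset.sum_le_sum fun p _ => ?_
      exact hle p.1 p.2
    exact hsum.trans (ENNReal.sum_le_tsum s)
  calc ∑ p ∈ P, t p ≤ ∑ p ∈ P, (ENNReal.ofReal (t p)).toReal := h1
    _ = (∑ p ∈ P, ENNReal.ofReal (t p)).toReal :=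
        (ENNReal.toReal_sum (fun p _ => ENNReal.ofReal_ne_top)).symm
    _ ≤ (∑' p, Φ p).toReal := ENNReal.toReal_mono hΦ h2

lemma condB_S1 {g : ℕ → ℂ} (hB : CondB g) : S1 g ≠ ⊤ := by
  have h : S1 g + S2 g < ⊤ := hB
  exact (ENNReal.add_lt_top.mp h).1.ne

lemma condB_S2 {g : ℕ → ℂ} (hB : CondB g) : S2 g ≠ ⊤ := by
  have h : S1 g + S2 g < ⊤ := hB
  exact (ENNReal.add_lt_top.mp h).2.ne

lemma one_le_ofReal_log {p : ℕ} (hpp : p.Prime) {k : ℕ} (hk : 2 ≤ k) :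
    1 ≤ ENNReal.ofReal (Real.log ((p ^ k : ℕ) : ℝ)) := by
  rw [ENNReal.one_le_ofReal]
  have h2p : (2:ℝ) ≤ (p:ℝ) := by exact_mod_cast hpp.two_le
  have hlog4 : (1:ℝ) ≤ Real.log 4 := by
    rw [Real.le_log_iff_exp_le (by norm_num)]
    exact (Real.exp_one_lt_d9).le.trans (by norm_num)
  have : Real.log ((p ^ k : ℕ) : ℝ) = (k:ℝ) * Real.log p := by
    rw [Nat.cast_pow, Real.log_pow]
  rw [this]
  have h4 : Real.log 4 = 2 * Real.log 2 := by
    rw [show (4:ℝ) = 2 ^ 2 by norm_num, Real.log_pow]; norm_num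
  calc (1:ℝ) ≤ Real.log 4 := hlog4
    _ = 2 * Real.log 2 := h4
    _ ≤ (k:ℝ) * Real.log p := by
        apply mul_le_mul (by exact_mod_cast hk)
          (Real.log_le_log (by norm_num) h2p) (Real.log_nonneg (by norm_num))
          (by positivity)

lemma B1bound {g : ℕ → ℂ} (hB : CondB g) (K : ℕ → ℕ) {P : Finset ℕ}
    (hP : ∀ p ∈ P, p.Prime) :
    ∑ p ∈ P, Real.log p * (‖g p‖ / p) * ∑ s ∈ Finset.Icc 1 (K p), ‖g (p ^ s)‖ / (p:ℝ) ^ s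
      ≤ (S1 g).toReal := by
  apply sum_primes_le_toReal hP _ _ (condB_S1 hB)
  intro p hp
  have hpp := hP p hp
  have hlog : (0:ℝ) ≤ Real.log p := Real.log_nonneg (by exact_mod_cast hpp.one_lt.le)
  have hA : ENNReal.ofReal (Real.log p * (‖g p‖ / p))
      = (‖g p‖₊ : ℝ≥0∞) * ENNReal.ofReal (Real.log p) / ((p : ℕ) : ℝ≥0∞) := by
    rw [ENNReal.ofReal_mul hlog, ENNReal.ofReal_div_of_pos (by exact_mod_cast hpp.pos),
      ofReal_norm, enorm_eq_nnnorm, ENNReal.ofReal_natCast]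
    simp only [div_eq_mul_inv]; ring
  have hBle : ENNReal.ofReal (∑ s ∈ Finset.Icc 1 (K p), ‖g (p ^ s)‖ / (p:ℝ) ^ s)
      ≤ ∑' r : ℕ, (‖g (p ^ (r + 1))‖₊ : ℝ≥0∞) / ((p ^ (r + 1) : ℕ) : ℝ≥0∞) := by
    rw [ENNReal.ofReal_sum_of_nonneg (fun s _ => by positivity)]
    have himg : Finset.Icc 1 (K p) ⊆ Finset.image (· + 1) (Finset.range (K p)) := by
      intro s hs
      simp only [mem_Icc] at hs
      simp only [mem_image, mem_range]
      exact ⟨s - 1, by omega, by omega⟩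
    calc ∑ s ∈ Finset.Icc 1 (K p), ENNReal.ofReal (‖g (p ^ s)‖ / (p:ℝ) ^ s)
        ≤ ∑ s ∈ Finset.image (· + 1) (Finset.range (K p)),
            ENNReal.ofReal (‖g (p ^ s)‖ / (p:ℝ) ^ s) :=
          Finset.sum_le_sum_of_subset himg
      _ = ∑ r ∈ Finset.range (K p), ENNReal.ofReal (‖g (p ^ (r + 1))‖ / (p:ℝ) ^ (r + 1)) :=
          Finset.sum_image (fun a _ b _ h => by omega)
      _ ≤ ∑' r : ℕ, (‖g (p ^ (r + 1))‖₊ : ℝ≥0∞) / ((p ^ (r + 1) : ℕ) : ℝ≥0∞) := by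
          refine le_trans (Finset.sum_le_sum fun r _ => ?_) (ENNReal.sum_le_tsum _)
          rw [ennterm_eq g hpp.pos]
  calc ENNReal.ofReal (Real.log p * (‖g p‖ / p)
          * ∑ s ∈ Finset.Icc 1 (K p), ‖g (p ^ s)‖ / (p:ℝ) ^ s)
      = ENNReal.ofReal (Real.log p * (‖g p‖ / p))
          * ENNReal.ofReal (∑ s ∈ Finset.Icc 1 (K p), ‖g (p ^ s)‖ / (p:ℝ) ^ s) :=
        ENNReal.ofReal_mul (by positivity)
    _ ≤ _ := by rw [hA]; exact mul_le_mul_right hBle _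

lemma B2bound {g : ℕ → ℂ} (hB : CondB g) (N : ℕ) {P : Finset ℕ}
    (hP : ∀ p ∈ P, p.Prime) :
    ∑ p ∈ P, ∑ r ∈ Finset.Icc 2 N, (r * Real.log p) * (‖g (p ^ r)‖ / (p:ℝ) ^ r)
      ≤ (S2 g).toReal := by
  apply sum_primes_le_toReal hP _ _ (condB_S2 hB)
  intro p hp
  have hpp := hP p hp
  have hterm : ∀ r : ℕ, ENNReal.ofReal ((r * Real.log p) * (‖g (p ^ r)‖ / (p:ℝ) ^ r))
      = (‖g (p ^ r)‖₊ : ℝ≥0∞) * ENNReal.ofReal (Real.log ((p ^ r : ℕ) : ℝ))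
          / ((p ^ r : ℕ) : ℝ≥0∞) := by
    intro r
    have hlog : (0:ℝ) ≤ (r:ℝ) * Real.log p := by
      have := Real.log_nonneg (by exact_mod_cast hpp.one_lt.le : (1:ℝ) ≤ (p:ℝ))
      positivity
    rw [ENNReal.ofReal_mul hlog, ennterm_eq g hpp.pos]
    have : Real.log ((p ^ r : ℕ) : ℝ) = (r:ℝ) * Real.log p := by
      rw [Nat.cast_pow, Real.log_pow]
    rw [this]
    simp only [div_eq_mul_inv]; ring
  rw [ENNReal.ofReal_sum_of_nonneg (fun r hr => by
    have : (0:ℝ) ≤ Real.log p := Real.log_nonneg (by exact_mod_cast hpp.one_lt.le)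
    positivity)]
  have himg : Finset.Icc 2 N ⊆ Finset.image (· + 2) (Finset.range N) := by
    intro r hr
    simp only [mem_Icc] at hr
    simp only [mem_image, mem_range]
    exact ⟨r - 2, by omega, by omega⟩
  refine le_trans (Finset.sum_le_sum_of_subset himg) ?_
  rw [Finset.sum_image
    (fun a _ b _ h => by omega :
      ∀ a ∈ Finset.range N, ∀ b ∈ Finset.range N, a + 2 = b + 2 → a = b)]
  refine le_trans (Finset.sum_le_sum fun r _ => ?_) (ENNReal.sum_le_tsum _)
  rw [hterm (r + 2)]

lemma tail_le_inner (g : ℕ → ℂ) {p : ℕ} (hpp : p.Prime) :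
    ∑' s : ℕ, ENNReal.ofReal (‖g (p ^ (s + 2))‖ / (p:ℝ) ^ (s + 2))
      ≤ ∑' r : ℕ, (‖g (p ^ (r + 2))‖₊ : ℝ≥0∞)
          * ENNReal.ofReal (Real.log ((p ^ (r + 2) : ℕ) : ℝ))
          / ((p ^ (r + 2) : ℕ) : ℝ≥0∞) := by
  refine ENNReal.tsum_le_tsum fun s => ?_
  rw [ennterm_eq g hpp.pos]
  rw [ENNReal.div_le_iff_le_mul] <;> try {left; simp [hpp.pos.ne', pow_eq_zero_iff]}
  · calc (‖g (p ^ (s + 2))‖₊ : ℝ≥0∞)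
        ≤ (‖g (p ^ (s + 2))‖₊ : ℝ≥0∞) * ENNReal.ofReal (Real.log ((p ^ (s + 2) : ℕ) : ℝ)) :=
          le_mul_of_one_le_right' (one_le_ofReal_log hpp (by omega))
      _ ≤ _ := by
          rw [ENNReal.div_mul_cancel] <;> simp [hpp.pos.ne', pow_eq_zero_iff]

lemma summable_gp {g : ℕ → ℂ} (hB : CondB g) {p : ℕ} (hpp : p.Prime) :
    Summable (fun s : ℕ => ‖g (p ^ s)‖ / (p:ℝ) ^ s) := by
  have hinner : (∑' r : ℕ, (‖g (p ^ (r + 2))‖₊ : ℝ≥0∞)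
      * ENNReal.ofReal (Real.log ((p ^ (r + 2) : ℕ) : ℝ))
      / ((p ^ (r + 2) : ℕ) : ℝ≥0∞)) ≠ ⊤ := by
    refine ne_top_of_le_ne_top (condB_S2 hB) ?_
    exact ENNReal.le_tsum (⟨p, hpp⟩ : Nat.Primes)
  have h1 : (∑' s : ℕ, ENNReal.ofReal (‖g (p ^ (s + 2))‖ / (p:ℝ) ^ (s + 2))) ≠ ⊤ :=
    ne_top_of_le_ne_top hinner (tail_le_inner g hpp)
  have h2 : Summable (fun s : ℕ => ‖g (p ^ (s + 2))‖ / (p:ℝ) ^ (s + 2)) := by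
    have := ENNReal.summable_toReal h1
    refine this.congr fun s => ?_
    exact ENNReal.toReal_ofReal (by positivity)
  exact (summable_nat_add_iff 2).mp h2

lemma T2p_le {g : ℕ → ℂ} (hB : CondB g) {P : Finset ℕ} (hP : ∀ p ∈ P, p.Prime) :
    ∑ p ∈ P, (∑' s : ℕ, ‖g (p ^ (s + 2))‖ / (p:ℝ) ^ (s + 2)) ≤ (S2 g).toReal := by
  apply sum_primes_le_toReal hP _ _ (condB_S2 hB)
  intro p hp
  have hpp := hP p hp
  rw [ENNReal.ofReal_tsum_of_nonneg (fun s => by positivity)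
    ((summable_nat_add_iff 2).mpr (summable_gp hB hpp))]
  exact tail_le_inner g hpp

lemma fabs_mult {g : ℕ → ℂ} (hg1 : g 1 = 1)
    (hgm : ∀ m n : ℕ, Nat.Coprime m n → g (m * n) = g m * g n) :
    ∀ m n : ℕ, Nat.Coprime m n → ‖g (m * n)‖ / ((m * n : ℕ) : ℝ)
      = (‖g m‖ / m) * (‖g n‖ / n) := by
  intro m n hmn
  rcases Nat.eq_zero_or_pos m with hm | hm
  · subst hm
    have hn1 : n = 1 := by simpa using hmn
    subst hn1
    simp
  rcases Nat.eq_zero_or_pos n with hn | hn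
  · subst hn
    have hm1 : m = 1 := by simpa using hmn
    subst hm1
    simp
  rw [hgm m n hmn, norm_mul]
  push_cast
  field_simp

set_option maxHeartbeats 1000000 in
lemma Lsum_le {g : ℕ → ℂ} (hg1 : g 1 = 1)
    (hgm : ∀ m n : ℕ, Nat.Coprime m n → g (m * n) = g m * g n) (hB : CondB g)
    {x : ℝ} (hx : 0 ≤ x) :
    ∑ n ∈ Finset.Icc 1 ⌊x⌋₊, ‖g n‖ / (n:ℝ)
      ≤ Real.exp ((S2 g).toReal) * ∏ p ∈ primesLE x, (1 + ‖g p‖ / (p:ℝ)) := by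
  classical
  set N := ⌊x⌋₊ with hN
  set f : ℕ → ℝ := fun n => ‖g n‖ / n with hf
  have hf1 : f 1 = 1 := by simp [hf, hg1]
  have hfmul : ∀ {m n : ℕ}, Nat.Coprime m n → f (m * n) = f m * f n := by
    intro m n hmn
    simpa [hf] using fabs_mult hg1 hgm m n hmn
  have he2 : ∀ (p s : ℕ), f (p ^ s) = ‖g (p ^ s)‖ / (p:ℝ) ^ s := by
    intro p s
    show ‖g (p ^ s)‖ / ((p ^ s : ℕ) : ℝ) = _
    push_cast
    ring
  have hfnn : ∀ n, 0 ≤ f n := fun n => by positivity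
  have hsump : ∀ {p : ℕ}, p.Prime → Summable (fun n : ℕ => ‖f (p ^ n)‖) := by
    intro p hp
    refine (summable_gp hB hp).congr fun s => ?_
    rw [Real.norm_of_nonneg (hfnn _), he2 p s]
  have hsumf : ∀ {p : ℕ}, p.Prime → Summable (fun n : ℕ => f (p ^ n)) := by
    intro p hp
    exact (summable_gp hB hp).congr fun s => (he2 p s).symm
  obtain ⟨hsummable, hhasSum⟩ :=
    EulerProduct.summable_and_hasSum_smoothNumbers_prod_primesBelow_tsum
      hf1 hfmul hsump (N + 1)
  -- step 1 : partial sum ≤ Euler product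
  have hmemS : ∀ n ∈ Finset.Icc 1 N, n ∈ (N + 1).smoothNumbers := by
    intro n hn
    rw [Finset.mem_Icc] at hn
    rw [Nat.mem_smoothNumbers]
    refine ⟨by omega, fun p hp => ?_⟩
    have := Nat.le_of_mem_primeFactorsList hp
    omega
  have hstep1 : ∑ n ∈ Finset.Icc 1 N, f n
      ≤ ∏ p ∈ (N + 1).primesBelow, ∑' n : ℕ, f (p ^ n) := by
    set t : Finset ((N + 1).smoothNumbers) :=
      (Finset.Icc 1 N).attach.map
        ⟨fun n => ⟨n.1, hmemS n.1 n.2⟩, by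
          intro a b hab
          have := congrArg (fun q : (N + 1).smoothNumbers => (q : ℕ)) hab
          exact Subtype.ext this⟩ with ht
    have : ∑ n ∈ Finset.Icc 1 N, f n = ∑ q ∈ t, f q := by
      rw [ht, Finset.sum_map]
      exact (Finset.sum_attach _ _).symm
    rw [this]
    exact sum_le_hasSum t (fun i _ => by positivity) hhasSum
  -- step 2 : factor bound
  have hfac : ∀ p ∈ (N + 1).primesBelow, (∑' n : ℕ, f (p ^ n))
      ≤ (1 + f p) * (1 + ∑' s : ℕ, f (p ^ (s + 2))) := by
    intro p hp
    have hpp := Nat.prime_of_mem_primesBelow hp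
    have hsum0 : Summable (fun n : ℕ => f (p ^ n)) := hsumf hpp
    have hsum1 : Summable (fun n : ℕ => f (p ^ (n + 1))) :=
      (summable_nat_add_iff 1).mpr hsum0
    have hsum2 : Summable (fun n : ℕ => f (p ^ (n + 2))) :=
      (summable_nat_add_iff 2).mpr hsum0
    have hexp : ∑' n : ℕ, f (p ^ n)
        = 1 + (f p + ∑' s : ℕ, f (p ^ (s + 2))) := by
      have h0 : f (p ^ 0) = 1 := by rw [pow_zero, hf1]
      rw [Summable.tsum_eq_zero_add hsum0, h0, Summable.tsum_eq_zero_add hsum1]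
      norm_num
    rw [hexp]
    have h1 : 0 ≤ f p := by positivity
    have h2 : 0 ≤ ∑' s : ℕ, f (p ^ (s + 2)) := tsum_nonneg fun s => by positivity
    nlinarith
  have hstep2 : ∏ p ∈ (N + 1).primesBelow, (∑' n : ℕ, f (p ^ n))
      ≤ (∏ p ∈ (N + 1).primesBelow, (1 + f p))
          * ∏ p ∈ (N + 1).primesBelow, (1 + ∑' s : ℕ, f (p ^ (s + 2))) := by
    rw [← Finset.prod_mul_distrib]
    refine Finset.prod_le_prod (fun p hp => tsum_nonneg fun n => by positivity)
      (fun p hp => hfac p hp)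
  have hstep3 : ∏ p ∈ (N + 1).primesBelow, (1 + ∑' s : ℕ, f (p ^ (s + 2)))
      ≤ Real.exp ((S2 g).toReal) := by
    have hTnn : ∀ p, 0 ≤ ∑' s : ℕ, f (p ^ (s + 2)) := fun p => tsum_nonneg fun s => by positivity
    calc ∏ p ∈ (N + 1).primesBelow, (1 + ∑' s : ℕ, f (p ^ (s + 2)))
        ≤ ∏ p ∈ (N + 1).primesBelow, Real.exp (∑' s : ℕ, f (p ^ (s + 2))) :=
          Finset.prod_le_prod (fun p _ => by have := hTnn p; linarith)
            (fun p _ => by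
              have := Real.add_one_le_exp (∑' s : ℕ, f (p ^ (s + 2)))
              linarith)
      _ = Real.exp (∑ p ∈ (N + 1).primesBelow, ∑' s : ℕ, f (p ^ (s + 2))) :=
          (Real.exp_sum _ _).symm
      _ ≤ Real.exp ((S2 g).toReal) := by
          apply Real.exp_le_exp.mpr
          have hrw : ∑ p ∈ (N + 1).primesBelow, ∑' s : ℕ, f (p ^ (s + 2))
              = ∑ p ∈ (N + 1).primesBelow, ∑' s : ℕ, ‖g (p ^ (s + 2))‖ / (p:ℝ) ^ (s + 2) :=
            Finset.sum_congr rfl fun p _ => tsum_congr fun s => he2 p (s + 2)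
          rw [hrw]
          exact T2p_le hB (fun p hp => Nat.prime_of_mem_primesBelow hp)
  calc ∑ n ∈ Finset.Icc 1 N, f n
      ≤ ∏ p ∈ (N + 1).primesBelow, ∑' n : ℕ, f (p ^ n) := hstep1
    _ ≤ (∏ p ∈ (N + 1).primesBelow, (1 + f p))
          * ∏ p ∈ (N + 1).primesBelow, (1 + ∑' s : ℕ, f (p ^ (s + 2))) := hstep2
    _ ≤ (∏ p ∈ (N + 1).primesBelow, (1 + f p)) * Real.exp ((S2 g).toReal) := by
        refine mul_le_mul_of_nonneg_left hstep3 ?_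
        exact Finset.prod_nonneg fun p _ => by positivity
    _ = Real.exp ((S2 g).toReal) * ∏ p ∈ primesLE x, (1 + ‖g p‖ / (p:ℝ)) := by
        rw [primesLE_eq, mul_comm]

lemma log_decomp {x : ℝ} (hx0 : 0 ≤ x) {n : ℕ} (hn : n ∈ Finset.Icc 1 ⌊x⌋₊) :
    Real.log n = ∑ p ∈ primesLE x, (n.factorization p : ℝ) * Real.log p := by
  obtain ⟨hn1, hnx⟩ := (mem_IccN hx0).mp hn
  have hne : n ≠ 0 := by omega
  have hsub : n.primeFactors ⊆ primesLE x := by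
    intro p hp
    rw [mem_primesLE hx0]
    have hpp := Nat.prime_of_mem_primeFactors hp
    have hpn : p ≤ n := Nat.le_of_dvd (by omega) (Nat.dvd_of_mem_primeFactors hp)
    exact ⟨hpp, le_trans (by exact_mod_cast hpn) hnx⟩
  rw [← Finset.sum_subset hsub (fun p _ hps => by
    have h0 : n.factorization p = 0 := by
      rwa [← Nat.support_factorization, Finsupp.notMem_support_iff] at hps
    rw [h0]; simp)]
  conv_lhs => rw [← Nat.factorization_prod_pow_eq_self hne]
  rw [Finsupp.prod, Nat.cast_prod]
  rw [Real.log_prod (fun p hp => by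
    have hpp : p.Prime := Nat.prime_of_mem_primeFactors (by
      rwa [← Nat.support_factorization])
    exact Nat.cast_ne_zero.mpr (pow_ne_zero _ hpp.pos.ne'))]
  rw [Nat.support_factorization]
  refine Finset.sum_congr rfl fun p hp => ?_
  rw [Nat.cast_pow, Real.log_pow]

lemma swap_sum (c b : ℕ → ℂ) {x : ℝ} (hx : 0 ≤ x) :
    ∑ p ∈ primesLE x, c p * ∑ m ∈ Finset.Icc 1 ⌊x / (p:ℝ)⌋₊, b m
      = ∑ m ∈ Finset.Icc 1 ⌊x⌋₊, b m * ∑ p ∈ primesLE (x / (m:ℝ)), c p := by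
  have lhs_eq : ∀ p ∈ primesLE x,
      Finset.Icc 1 ⌊x / (p:ℝ)⌋₊
        = (Finset.Icc 1 ⌊x⌋₊).filter (fun m : ℕ => (m:ℝ) ≤ x / (p:ℝ)) := by
    intro p hp
    obtain ⟨hpp, hpx⟩ := (mem_primesLE hx).mp hp
    have hp1 : (1:ℝ) ≤ (p:ℝ) := by exact_mod_cast hpp.one_lt.le
    ext m
    rw [mem_filter, mem_IccN (by positivity), mem_IccN hx]
    constructor
    · rintro ⟨h1, h2⟩
      exact ⟨⟨h1, h2.trans (div_le_self hx hp1)⟩, h2⟩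
    · rintro ⟨⟨h1, _⟩, h2⟩
      exact ⟨h1, h2⟩
  have rhs_eq : ∀ m ∈ Finset.Icc 1 ⌊x⌋₊,
      primesLE (x / (m:ℝ))
        = (primesLE x).filter (fun p : ℕ => (p:ℝ) ≤ x / (m:ℝ)) := by
    intro m hm
    obtain ⟨hm1, hmx⟩ := (mem_IccN hx).mp hm
    have hm1' : (1:ℝ) ≤ (m:ℝ) := by exact_mod_cast hm1
    ext p
    rw [mem_filter, mem_primesLE (by positivity), mem_primesLE hx]
    constructor
    · rintro ⟨h1, h2⟩
      exact ⟨⟨h1, h2.trans (div_le_self hx hm1')⟩, h2⟩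
    · rintro ⟨⟨h1, _⟩, h2⟩
      exact ⟨h1, h2⟩
  calc ∑ p ∈ primesLE x, c p * ∑ m ∈ Finset.Icc 1 ⌊x / (p:ℝ)⌋₊, b m
      = ∑ p ∈ primesLE x, ∑ m ∈ Finset.Icc 1 ⌊x⌋₊,
          (if (m:ℝ) ≤ x / (p:ℝ) then c p * b m else 0) := by
        refine Finset.sum_congr rfl fun p hp => ?_
        rw [lhs_eq p hp, Finset.mul_sum, Finset.sum_filter]
    _ = ∑ m ∈ Finset.Icc 1 ⌊x⌋₊, ∑ p ∈ primesLE x,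
          (if (m:ℝ) ≤ x / (p:ℝ) then c p * b m else 0) := Finset.sum_comm
    _ = ∑ m ∈ Finset.Icc 1 ⌊x⌋₊, b m * ∑ p ∈ primesLE (x / (m:ℝ)), c p := by
        refine Finset.sum_congr rfl fun m hm => ?_
        obtain ⟨hm1, hmx⟩ := (mem_IccN hx).mp hm
        rw [rhs_eq m hm, Finset.mul_sum, Finset.sum_filter]
        refine Finset.sum_congr rfl fun p hp => ?_
        obtain ⟨hpp, hpx⟩ := (mem_primesLE hx).mp hp
        have hmpos : (0:ℝ) < (m:ℝ) := by exact_mod_cast hm1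
        have hppos : (0:ℝ) < (p:ℝ) := by exact_mod_cast hpp.pos
        have hiff : ((m:ℝ) ≤ x / (p:ℝ)) ↔ ((p:ℝ) ≤ x / (m:ℝ)) := by
          rw [le_div_iff₀ hppos, le_div_iff₀ hmpos, mul_comm]
        rw [if_congr hiff rfl rfl]
        split <;> ring

noncomputable def Dgen {K : Type*} [Field K] (h : ℕ → K) (x : ℝ) (p r : ℕ) : K :=
  ∑ m ∈ (Finset.Icc 1 ⌊x / (p:ℝ) ^ r⌋₊).filter (fun m => ¬ p ∣ m), h m / (m : K)

lemma fiber_decomp' {K : Type*} [Field K] (h : ℕ → K)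
    (hmul : ∀ m n : ℕ, Nat.Coprime m n → h (m * n) = h m * h n)
    (w : ℕ → K) {p : ℕ} (hp : p.Prime) {x : ℝ} (hx : 0 ≤ x) :
    ∑ n ∈ Finset.Icc 1 ⌊x⌋₊, w (n.factorization p) * h n / (n : K)
      = ∑ r ∈ Finset.Icc 0 ⌊x⌋₊, w r * (h (p ^ r) / (p : K) ^ r) * Dgen h x p r :=
  fiber_decomp h hmul w hp hx

lemma divpart_bound {g : ℕ → ℂ}
    (hgm : ∀ m n : ℕ, Nat.Coprime m n → g (m * n) = g m * g n)
    {p : ℕ} (hp : p.Prime) {y x : ℝ} (hy0 : 0 ≤ y) (hyx : y ≤ x) (hx0 : 0 ≤ x) :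
    ‖∑ m ∈ (Finset.Icc 1 ⌊y⌋₊).filter (fun m => p ∣ m), g m / (m:ℂ)‖
      ≤ (∑ s ∈ Finset.Icc 1 ⌊y⌋₊, ‖g (p ^ s)‖ / (p:ℝ) ^ s)
          * (∑ n ∈ Finset.Icc 1 ⌊x⌋₊, ‖g n‖ / (n:ℝ)) := by
  classical
  set L := ∑ n ∈ Finset.Icc 1 ⌊x⌋₊, ‖g n‖ / (n:ℝ) with hLdef
  have hLnn : 0 ≤ L := Finset.sum_nonneg fun n _ => by positivity
  have hp1 : (1:ℝ) ≤ (p:ℝ) := by exact_mod_cast hp.one_lt.le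
  have habs : ∀ m n : ℕ, Nat.Coprime m n → ‖g (m*n)‖ = ‖g m‖ * ‖g n‖ := fun m n h => by
    rw [hgm m n h, norm_mul]
  set w : ℕ → ℝ := fun r => if r = 0 then 0 else 1 with hw
  have step1 : ‖∑ m ∈ (Finset.Icc 1 ⌊y⌋₊).filter (fun m => p ∣ m), g m / (m:ℂ)‖
      ≤ ∑ m ∈ (Finset.Icc 1 ⌊y⌋₊).filter (fun m => p ∣ m), ‖g m‖ / (m:ℝ) := by
    refine (norm_sum_le _ _).trans (le_of_eq (Finset.sum_congr rfl fun m _ => ?_))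
    rw [norm_div, Complex.norm_natCast]
  have step2 : ∑ m ∈ (Finset.Icc 1 ⌊y⌋₊).filter (fun m => p ∣ m), ‖g m‖ / (m:ℝ)
      = ∑ r ∈ Finset.Icc 0 ⌊y⌋₊, w r * (‖g (p ^ r)‖ / (p:ℝ) ^ r)
          * Dgen (fun n => ‖g n‖) y p r := by
    rw [← fiber_decomp' (K := ℝ) (fun n => ‖g n‖) habs w hp hy0, Finset.sum_filter]
    refine Finset.sum_congr rfl fun m hm => ?_
    obtain ⟨hm1, _⟩ := (mem_IccN hy0).mp hm
    by_cases hdvd : p ∣ m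
    · have hfz : m.factorization p ≠ 0 := by
        have := hp.factorization_pos_of_dvd (by omega) hdvd
        omega
      rw [if_pos hdvd, hw]
      simp only [if_neg hfz, one_mul]
    · have hfz : m.factorization p = 0 := Nat.factorization_eq_zero_of_not_dvd hdvd
      rw [if_neg hdvd, hw]
      simp [hfz]
  have step3 : ∑ r ∈ Finset.Icc 0 ⌊y⌋₊, w r * (‖g (p ^ r)‖ / (p:ℝ) ^ r)
          * Dgen (fun n => ‖g n‖) y p r
      ≤ ∑ r ∈ Finset.Icc 1 ⌊y⌋₊, (‖g (p ^ r)‖ / (p:ℝ) ^ r) * L := by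
    have hins : Finset.Icc 0 ⌊y⌋₊ = insert 0 (Finset.Icc 1 ⌊y⌋₊) := by
      ext r; simp only [Finset.mem_Icc, Finset.mem_insert]; omega
    have h00 : w 0 = 0 := by simp [hw]
    rw [hins, Finset.sum_insert (by simp [Finset.mem_Icc]), h00, zero_mul, zero_mul, zero_add]
    refine Finset.sum_le_sum fun r hr => ?_
    rw [Finset.mem_Icc] at hr
    have hw1 : w r = 1 := by rw [hw]; simp only [if_neg (by omega : ¬ r = 0)]
    rw [hw1, one_mul]
    refine mul_le_mul_of_nonneg_left ?_ (by positivity)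
    have hppow : (1:ℝ) ≤ (p:ℝ) ^ r := one_le_pow₀ hp1
    have hsub : (Finset.Icc 1 ⌊y / (p:ℝ) ^ r⌋₊).filter (fun m => ¬ p ∣ m)
        ⊆ Finset.Icc 1 ⌊x⌋₊ := by
      intro m hm
      rw [Finset.mem_filter] at hm
      have h1 := (mem_IccN (by positivity)).mp hm.1
      rw [mem_IccN hx0]
      exact ⟨h1.1, h1.2.trans ((div_le_self hy0 hppow).trans hyx)⟩
    calc Dgen (fun n => ‖g n‖) y p r
        = ∑ m ∈ (Finset.Icc 1 ⌊y / (p:ℝ) ^ r⌋₊).filter (fun m => ¬ p ∣ m), ‖g m‖ / (m:ℝ) :=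
          rfl
      _ ≤ L := Finset.sum_le_sum_of_subset_of_nonneg hsub (fun m _ _ => by positivity)
  calc ‖∑ m ∈ (Finset.Icc 1 ⌊y⌋₊).filter (fun m => p ∣ m), g m / (m:ℂ)‖
      ≤ ∑ m ∈ (Finset.Icc 1 ⌊y⌋₊).filter (fun m => p ∣ m), ‖g m‖ / (m:ℝ) := step1
    _ = _ := step2
    _ ≤ ∑ r ∈ Finset.Icc 1 ⌊y⌋₊, (‖g (p ^ r)‖ / (p:ℝ) ^ r) * L := step3
    _ = (∑ s ∈ Finset.Icc 1 ⌊y⌋₊, ‖g (p ^ s)‖ / (p:ℝ) ^ s) * L := (Finset.sum_mul _ _ _).symm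

set_option maxHeartbeats 2000000 in
theorem stmt10 (g : ℕ → ℂ) (κ : ℂ) (β : ℝ) (hg : IsMult g)
    (hA : CondA g κ) (hB : CondB g)
    (hβ0 : 0 ≤ β) (hC : CondC g β) :
    ∃ C : ℝ, ∀ x : ℝ, 2 ≤ x →
      ‖Mg g x * (Real.log x : ℂ) - (κ + 1) * ∫ t in (2 : ℝ)..x, Mg g t / (t : ℂ)‖ ≤
        C * Real.log x ^ β := by
  classical
  obtain ⟨hg1, hgm⟩ := hg
  obtain ⟨CA, hCA⟩ := hA
  obtain ⟨CC, hCC⟩ := hC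
  have hB1nn : (0:ℝ) ≤ (S1 g).toReal := ENNReal.toReal_nonneg
  have hB2nn : (0:ℝ) ≤ (S2 g).toReal := ENNReal.toReal_nonneg
  have hlog2 : (0:ℝ) < Real.log 2 := Real.log_pos (by norm_num)
  set B1 := (S1 g).toReal with hB1def
  set B2 := (S2 g).toReal with hB2def
  set C' := max CA (‖κ‖ * Real.log 2) with hC'def
  have hC'nn : 0 ≤ C' := le_trans (mul_nonneg (norm_nonneg κ) hlog2.le) (le_max_right _ _)
  set CL := Real.exp B2 * CC with hCLdef
  refine ⟨(B1 + B2 + C') * CL + (1 + ‖κ‖) * Real.log 2 / Real.log 2 ^ β, ?_⟩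
  intro x hx
  have hx0 : (0:ℝ) ≤ x := by linarith
  have hlogx : Real.log 2 ≤ Real.log x := Real.log_le_log (by norm_num) hx
  have hrpow : Real.log 2 ^ β ≤ Real.log x ^ β := Real.rpow_le_rpow hlog2.le hlogx hβ0
  have hrpow0 : (0:ℝ) < Real.log 2 ^ β := Real.rpow_pos_of_pos hlog2 β
  set L := ∑ n ∈ Finset.Icc 1 ⌊x⌋₊, ‖g n‖ / (n:ℝ) with hLdef
  have hLnn : 0 ≤ L := Finset.sum_nonneg fun n _ => by positivity
  have hLle : L ≤ CL * Real.log x ^ β := by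
    calc L ≤ Real.exp B2 * ∏ p ∈ primesLE x, (1 + ‖g p‖ / (p:ℝ)) := Lsum_le hg1 hgm hB hx0
      _ ≤ Real.exp B2 * (CC * Real.log x ^ β) :=
          mul_le_mul_of_nonneg_left (hCC x hx) (Real.exp_nonneg _)
      _ = CL * Real.log x ^ β := by rw [hCLdef]; ring
  -- norm of D bound
  have hDle : ∀ p r : ℕ, p.Prime → ‖Dgen g x p r‖ ≤ L := by
    intro p r hp
    have hp1 : (1:ℝ) ≤ (p:ℝ) := by exact_mod_cast hp.one_lt.le
    have hppow : (1:ℝ) ≤ (p:ℝ) ^ r := one_le_pow₀ hp1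
    have hsub : (Finset.Icc 1 ⌊x / (p:ℝ) ^ r⌋₊).filter (fun m => ¬ p ∣ m)
        ⊆ Finset.Icc 1 ⌊x⌋₊ := by
      intro m hm
      rw [Finset.mem_filter] at hm
      have h1 := (mem_IccN (by positivity)).mp hm.1
      rw [mem_IccN hx0]
      exact ⟨h1.1, h1.2.trans (div_le_self hx0 hppow)⟩
    calc ‖Dgen g x p r‖
        ≤ ∑ m ∈ (Finset.Icc 1 ⌊x / (p:ℝ) ^ r⌋₊).filter (fun m => ¬ p ∣ m), ‖g m‖ / (m:ℝ) := by
          refine (norm_sum_le _ _).trans (le_of_eq (Finset.sum_congr rfl fun m _ => ?_))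
          rw [norm_div, Complex.norm_natCast]
      _ ≤ L := Finset.sum_le_sum_of_subset_of_nonneg hsub (fun m _ _ => by positivity)
  set W := ∑ n ∈ Finset.Icc 1 ⌊x⌋₊, g n / (n:ℂ) * (Real.log (x / n) : ℂ) with hWdef
  set T := ∑ n ∈ Finset.Icc 1 ⌊x⌋₊, g n / (n:ℂ) * (Real.log n : ℂ) with hTdef
  have hMgx : Mg g x * (Real.log x : ℂ) = T + W := by
    rw [hTdef, hWdef]
    simp only [Mg]
    rw [Finset.sum_mul, ← Finset.sum_add_distrib]
    refine Finset.sum_congr rfl fun n hn => ?_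
    obtain ⟨hn1, hnx⟩ := (mem_IccN hx0).mp hn
    have hn0 : (0:ℝ) < (n:ℝ) := by exact_mod_cast hn1
    have : Real.log (x / n) = Real.log x - Real.log n :=
      Real.log_div (by linarith) hn0.ne'
    rw [this]
    push_cast
    ring
  have hInt : (∫ t in (2:ℝ)..x, Mg g t / (t:ℂ)) = W - (Real.log 2 : ℂ) := by
    rw [integral_Mg g hx, hg1, mul_one, hWdef]
  set Afun : ℝ → ℂ := fun y => ∑ p ∈ primesLE y, g p * (Real.log p : ℂ) / (p:ℂ) with hAdef
  have hAbound : ∀ m ∈ Finset.Icc 1 ⌊x⌋₊,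
      ‖Afun (x / (m:ℝ)) - κ * (Real.log (x / (m:ℝ)) : ℂ)‖ ≤ C' := by
    intro m hm
    obtain ⟨hm1, hmx⟩ := (mem_IccN hx0).mp hm
    have hmpos : (0:ℝ) < (m:ℝ) := by exact_mod_cast hm1
    rcases le_or_gt 2 (x / (m:ℝ)) with h2 | h2
    · exact le_trans (hCA _ h2) (le_max_left _ _)
    · have hy1 : (1:ℝ) ≤ x / (m:ℝ) := (one_le_div hmpos).mpr hmx
      have hfloor : ⌊x / (m:ℝ)⌋₊ = 1 := by
        rw [Nat.floor_eq_iff (by positivity)]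
        push_cast
        exact ⟨hy1, by linarith⟩
      have hempty : primesLE (x / (m:ℝ)) = ∅ := by
        ext q
        simp only [primesLE, hfloor, Finset.mem_filter, Finset.mem_range,
          Finset.notMem_empty, iff_false, not_and]
        intro hq hqp
        have := hqp.two_le
        omega
      rw [hAdef]
      simp only [hempty, Finset.sum_empty, zero_sub, norm_neg]
      have hlognn : 0 ≤ Real.log (x / (m:ℝ)) := Real.log_nonneg hy1
      have hloglt : Real.log (x / (m:ℝ)) ≤ Real.log 2 :=
        Real.log_le_log (by linarith) h2.le
      calc ‖κ * (Real.log (x / (m:ℝ)) : ℂ)‖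
          = ‖κ‖ * Real.log (x / (m:ℝ)) := by
            rw [norm_mul, Complex.norm_real, Real.norm_of_nonneg hlognn]
        _ ≤ ‖κ‖ * Real.log 2 := mul_le_mul_of_nonneg_left hloglt (norm_nonneg _)
        _ ≤ C' := le_max_right _ _
  set P := ∑ p ∈ primesLE x, g p * (Real.log p : ℂ) / (p:ℂ) * Mg g (x / (p:ℝ)) with hPdef
  have hswap : P = ∑ m ∈ Finset.Icc 1 ⌊x⌋₊, g m / (m:ℂ) * Afun (x / (m:ℝ)) := by
    rw [hPdef, hAdef]
    have h := swap_sum (fun p => g p * (Real.log p : ℂ) / (p:ℂ)) (fun m => g m / (m:ℂ)) hx0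
    simpa only [Mg] using h
  have hTdecomp : T = ∑ p ∈ primesLE x, (Real.log p : ℂ) *
      ∑ r ∈ Finset.Icc 0 ⌊x⌋₊, (r:ℂ) * (g (p ^ r) / (p:ℂ) ^ r) * Dgen g x p r := by
    rw [hTdef]
    calc ∑ n ∈ Finset.Icc 1 ⌊x⌋₊, g n / (n:ℂ) * (Real.log n : ℂ)
        = ∑ n ∈ Finset.Icc 1 ⌊x⌋₊, ∑ p ∈ primesLE x,
            (Real.log p : ℂ) * ((n.factorization p : ℂ) * g n / (n:ℂ)) := by
          refine Finset.sum_congr rfl fun n hn => ?_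
          rw [log_decomp hx0 hn]
          push_cast
          rw [Finset.mul_sum]
          refine Finset.sum_congr rfl fun p _ => ?_
          ring
      _ = ∑ p ∈ primesLE x, ∑ n ∈ Finset.Icc 1 ⌊x⌋₊,
            (Real.log p : ℂ) * ((n.factorization p : ℂ) * g n / (n:ℂ)) := Finset.sum_comm
      _ = _ := by
          refine Finset.sum_congr rfl fun p hp => ?_
          obtain ⟨hpp, _⟩ := (mem_primesLE hx0).mp hp
          rw [← Finset.mul_sum]
          congr 1
          exact fiber_decomp' (K := ℂ) g hgm (fun r => (r:ℂ)) hpp hx0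
  have hsplit : T = (∑ p ∈ primesLE x, (Real.log p : ℂ) * (g p / (p:ℂ) * Dgen g x p 1))
      + ∑ p ∈ primesLE x, (Real.log p : ℂ) *
          ∑ r ∈ Finset.Icc 2 ⌊x⌋₊, (r:ℂ) * (g (p ^ r) / (p:ℂ) ^ r) * Dgen g x p r := by
    rw [hTdecomp, ← Finset.sum_add_distrib]
    refine Finset.sum_congr rfl fun p hp => ?_
    rw [← mul_add]
    congr 1
    have hN2 : 2 ≤ ⌊x⌋₊ := Nat.le_floor (by exact_mod_cast hx)
    have hins : Finset.Icc 0 ⌊x⌋₊ = insert 0 (insert 1 (Finset.Icc 2 ⌊x⌋₊)) := by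
      ext r; simp only [Finset.mem_Icc, Finset.mem_insert]; omega
    rw [hins, Finset.sum_insert (by simp [Finset.mem_Icc]),
      Finset.sum_insert (by simp [Finset.mem_Icc])]
    simp only [Nat.cast_zero, zero_mul, Nat.cast_one, one_mul, pow_one, zero_add]
  have hE1 : ‖∑ p ∈ primesLE x, (Real.log p : ℂ) *
      ∑ r ∈ Finset.Icc 2 ⌊x⌋₊, (r:ℂ) * (g (p ^ r) / (p:ℂ) ^ r) * Dgen g x p r‖ ≤ B2 * L := by
    refine (norm_sum_le _ _).trans ?_
    have hterm : ∀ p ∈ primesLE x, ‖(Real.log p : ℂ) *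
        ∑ r ∈ Finset.Icc 2 ⌊x⌋₊, (r:ℂ) * (g (p ^ r) / (p:ℂ) ^ r) * Dgen g x p r‖
          ≤ (∑ r ∈ Finset.Icc 2 ⌊x⌋₊, ((r:ℝ) * Real.log p) * (‖g (p ^ r)‖ / (p:ℝ) ^ r)) * L := by
      intro p hp
      obtain ⟨hpp, _⟩ := (mem_primesLE hx0).mp hp
      have hlp : (0:ℝ) ≤ Real.log p := Real.log_nonneg (by exact_mod_cast hpp.one_lt.le)
      rw [norm_mul, Complex.norm_real, Real.norm_of_nonneg hlp, Finset.sum_mul]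
      calc Real.log p * ‖∑ r ∈ Finset.Icc 2 ⌊x⌋₊, (r:ℂ) * (g (p ^ r) / (p:ℂ) ^ r) * Dgen g x p r‖
          ≤ Real.log p * ∑ r ∈ Finset.Icc 2 ⌊x⌋₊,
              ‖(r:ℂ) * (g (p ^ r) / (p:ℂ) ^ r) * Dgen g x p r‖ :=
            mul_le_mul_of_nonneg_left (norm_sum_le _ _) hlp
        _ = ∑ r ∈ Finset.Icc 2 ⌊x⌋₊,
              Real.log p * ‖(r:ℂ) * (g (p ^ r) / (p:ℂ) ^ r) * Dgen g x p r‖ :=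
            Finset.mul_sum _ _ _
        _ ≤ ∑ r ∈ Finset.Icc 2 ⌊x⌋₊, ((r:ℝ) * Real.log p) * (‖g (p ^ r)‖ / (p:ℝ) ^ r) * L := by
            refine Finset.sum_le_sum fun r hr => ?_
            have hnorm : ‖(r:ℂ) * (g (p ^ r) / (p:ℂ) ^ r) * Dgen g x p r‖
                = (r:ℝ) * (‖g (p ^ r)‖ / (p:ℝ) ^ r) * ‖Dgen g x p r‖ := by
              rw [norm_mul, norm_mul, norm_div, norm_pow, Complex.norm_natCast,
                Complex.norm_natCast]
            rw [hnorm]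
            calc Real.log p * ((r:ℝ) * (‖g (p ^ r)‖ / (p:ℝ) ^ r) * ‖Dgen g x p r‖)
                ≤ Real.log p * ((r:ℝ) * (‖g (p ^ r)‖ / (p:ℝ) ^ r) * L) := by
                  refine mul_le_mul_of_nonneg_left
                    (mul_le_mul_of_nonneg_left (hDle p r hpp) (by positivity)) hlp
              _ = ((r:ℝ) * Real.log p) * (‖g (p ^ r)‖ / (p:ℝ) ^ r) * L := by ring
    calc ∑ p ∈ primesLE x, ‖(Real.log p : ℂ) *
          ∑ r ∈ Finset.Icc 2 ⌊x⌋₊, (r:ℂ) * (g (p ^ r) / (p:ℂ) ^ r) * Dgen g x p r‖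
        ≤ ∑ p ∈ primesLE x,
            (∑ r ∈ Finset.Icc 2 ⌊x⌋₊, ((r:ℝ) * Real.log p) * (‖g (p ^ r)‖ / (p:ℝ) ^ r)) * L :=
          Finset.sum_le_sum hterm
      _ = (∑ p ∈ primesLE x,
            ∑ r ∈ Finset.Icc 2 ⌊x⌋₊, ((r:ℝ) * Real.log p) * (‖g (p ^ r)‖ / (p:ℝ) ^ r)) * L :=
          (Finset.sum_mul _ _ _).symm
      _ ≤ B2 * L := by
          refine mul_le_mul_of_nonneg_right ?_ hLnn
          exact B2bound hB ⌊x⌋₊ (fun p hp => ((mem_primesLE hx0).mp hp).1)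
  have hE2 : ‖P - ∑ p ∈ primesLE x, (Real.log p : ℂ) * (g p / (p:ℂ) * Dgen g x p 1)‖
      ≤ B1 * L := by
    rw [hPdef, ← Finset.sum_sub_distrib]
    refine (norm_sum_le _ _).trans ?_
    have hterm : ∀ p ∈ primesLE x,
        ‖g p * (Real.log p : ℂ) / (p:ℂ) * Mg g (x / (p:ℝ))
            - (Real.log p : ℂ) * (g p / (p:ℂ) * Dgen g x p 1)‖
          ≤ (Real.log p * (‖g p‖ / (p:ℝ))
              * ∑ s ∈ Finset.Icc 1 ⌊x / (p:ℝ)⌋₊, ‖g (p ^ s)‖ / (p:ℝ) ^ s) * L := by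
      intro p hp
      obtain ⟨hpp, hpx⟩ := (mem_primesLE hx0).mp hp
      have hp1 : (1:ℝ) ≤ (p:ℝ) := by exact_mod_cast hpp.one_lt.le
      have hlp : (0:ℝ) ≤ Real.log p := Real.log_nonneg hp1
      have hMgsplit : Mg g (x / (p:ℝ))
          = (∑ m ∈ (Finset.Icc 1 ⌊x / (p:ℝ)⌋₊).filter (fun m => p ∣ m), g m / (m:ℂ))
            + Dgen g x p 1 := by
        rw [Mg, ← Finset.sum_filter_add_sum_filter_not (Finset.Icc 1 ⌊x / (p:ℝ)⌋₊)
          (fun m => p ∣ m) (fun m => g m / (m:ℂ))]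
        congr 1
        simp only [Dgen, pow_one]
      have heq : g p * (Real.log p : ℂ) / (p:ℂ) * Mg g (x / (p:ℝ))
            - (Real.log p : ℂ) * (g p / (p:ℂ) * Dgen g x p 1)
          = g p * (Real.log p : ℂ) / (p:ℂ)
              * ∑ m ∈ (Finset.Icc 1 ⌊x / (p:ℝ)⌋₊).filter (fun m => p ∣ m), g m / (m:ℂ) := by
        rw [hMgsplit]
        ring
      rw [heq, norm_mul]
      have hc : ‖g p * (Real.log p : ℂ) / (p:ℂ)‖ = Real.log p * (‖g p‖ / (p:ℝ)) := by
        rw [norm_div, norm_mul, Complex.norm_real, Real.norm_of_nonneg hlp,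
          Complex.norm_natCast]
        ring
      rw [hc]
      have hdb := divpart_bound hgm hpp (y := x / (p:ℝ)) (x := x)
        (by positivity) (div_le_self hx0 hp1) hx0
      calc Real.log p * (‖g p‖ / (p:ℝ))
            * ‖∑ m ∈ (Finset.Icc 1 ⌊x / (p:ℝ)⌋₊).filter (fun m => p ∣ m), g m / (m:ℂ)‖
          ≤ Real.log p * (‖g p‖ / (p:ℝ))
              * ((∑ s ∈ Finset.Icc 1 ⌊x / (p:ℝ)⌋₊, ‖g (p ^ s)‖ / (p:ℝ) ^ s) * L) :=
            mul_le_mul_of_nonneg_left hdb (by positivity)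
        _ = _ := by ring
    calc ∑ p ∈ primesLE x, ‖g p * (Real.log p : ℂ) / (p:ℂ) * Mg g (x / (p:ℝ))
            - (Real.log p : ℂ) * (g p / (p:ℂ) * Dgen g x p 1)‖
        ≤ ∑ p ∈ primesLE x, (Real.log p * (‖g p‖ / (p:ℝ))
              * ∑ s ∈ Finset.Icc 1 ⌊x / (p:ℝ)⌋₊, ‖g (p ^ s)‖ / (p:ℝ) ^ s) * L :=
          Finset.sum_le_sum hterm
      _ = (∑ p ∈ primesLE x, Real.log p * (‖g p‖ / (p:ℝ))
              * ∑ s ∈ Finset.Icc 1 ⌊x / (p:ℝ)⌋₊, ‖g (p ^ s)‖ / (p:ℝ) ^ s) * L :=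
          (Finset.sum_mul _ _ _).symm
      _ ≤ B1 * L := by
          refine mul_le_mul_of_nonneg_right ?_ hLnn
          exact B1bound hB (fun p => ⌊x / (p:ℝ)⌋₊) (fun p hp => ((mem_primesLE hx0).mp hp).1)
  have hPW : ‖P - κ * W‖ ≤ C' * L := by
    have hκW : κ * W = ∑ m ∈ Finset.Icc 1 ⌊x⌋₊,
        g m / (m:ℂ) * (κ * (Real.log (x / (m:ℝ)) : ℂ)) := by
      rw [hWdef, Finset.mul_sum]
      exact Finset.sum_congr rfl fun m _ => by ring
    rw [hswap, hκW, ← Finset.sum_sub_distrib]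
    refine (norm_sum_le _ _).trans ?_
    have hterm : ∀ m ∈ Finset.Icc 1 ⌊x⌋₊,
        ‖g m / (m:ℂ) * Afun (x / (m:ℝ)) - g m / (m:ℂ) * (κ * (Real.log (x / (m:ℝ)) : ℂ))‖
          ≤ (‖g m‖ / (m:ℝ)) * C' := by
      intro m hm
      rw [← mul_sub, norm_mul, norm_div, Complex.norm_natCast]
      exact mul_le_mul_of_nonneg_left (hAbound m hm) (by positivity)
    calc ∑ m ∈ Finset.Icc 1 ⌊x⌋₊,
          ‖g m / (m:ℂ) * Afun (x / (m:ℝ)) - g m / (m:ℂ) * (κ * (Real.log (x / (m:ℝ)) : ℂ))‖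
        ≤ ∑ m ∈ Finset.Icc 1 ⌊x⌋₊, (‖g m‖ / (m:ℝ)) * C' := Finset.sum_le_sum hterm
      _ = L * C' := by rw [hLdef, ← Finset.sum_mul]
      _ = C' * L := mul_comm _ _
  have hkey : Mg g x * (Real.log x : ℂ) - (κ + 1) * ∫ t in (2:ℝ)..x, Mg g t / (t:ℂ)
      = (∑ p ∈ primesLE x, (Real.log p : ℂ) *
            ∑ r ∈ Finset.Icc 2 ⌊x⌋₊, (r:ℂ) * (g (p ^ r) / (p:ℂ) ^ r) * Dgen g x p r)
        - (P - ∑ p ∈ primesLE x, (Real.log p : ℂ) * (g p / (p:ℂ) * Dgen g x p 1))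
        + (P - κ * W) + (κ + 1) * (Real.log 2 : ℂ) := by
    rw [hMgx, hInt, hsplit]
    ring
  rw [hkey]
  have hfinal1 : ‖(∑ p ∈ primesLE x, (Real.log p : ℂ) *
            ∑ r ∈ Finset.Icc 2 ⌊x⌋₊, (r:ℂ) * (g (p ^ r) / (p:ℂ) ^ r) * Dgen g x p r)
        - (P - ∑ p ∈ primesLE x, (Real.log p : ℂ) * (g p / (p:ℂ) * Dgen g x p 1))
        + (P - κ * W) + (κ + 1) * (Real.log 2 : ℂ)‖
      ≤ (B2 * L + B1 * L + C' * L) + (1 + ‖κ‖) * Real.log 2 := by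
    have h1 := norm_add_le ((∑ p ∈ primesLE x, (Real.log p : ℂ) *
            ∑ r ∈ Finset.Icc 2 ⌊x⌋₊, (r:ℂ) * (g (p ^ r) / (p:ℂ) ^ r) * Dgen g x p r)
        - (P - ∑ p ∈ primesLE x, (Real.log p : ℂ) * (g p / (p:ℂ) * Dgen g x p 1))
        + (P - κ * W)) ((κ + 1) * (Real.log 2 : ℂ))
    have h2 := norm_add_le ((∑ p ∈ primesLE x, (Real.log p : ℂ) *
            ∑ r ∈ Finset.Icc 2 ⌊x⌋₊, (r:ℂ) * (g (p ^ r) / (p:ℂ) ^ r) * Dgen g x p r)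
        - (P - ∑ p ∈ primesLE x, (Real.log p : ℂ) * (g p / (p:ℂ) * Dgen g x p 1)))
        (P - κ * W)
    have h3 := norm_sub_le (∑ p ∈ primesLE x, (Real.log p : ℂ) *
            ∑ r ∈ Finset.Icc 2 ⌊x⌋₊, (r:ℂ) * (g (p ^ r) / (p:ℂ) ^ r) * Dgen g x p r)
        (P - ∑ p ∈ primesLE x, (Real.log p : ℂ) * (g p / (p:ℂ) * Dgen g x p 1))
    have hk : ‖(κ + 1) * (Real.log 2 : ℂ)‖ ≤ (1 + ‖κ‖) * Real.log 2 := by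
      rw [norm_mul, Complex.norm_real, Real.norm_of_nonneg hlog2.le]
      refine mul_le_mul_of_nonneg_right ?_ hlog2.le
      calc ‖κ + 1‖ ≤ ‖κ‖ + ‖(1:ℂ)‖ := norm_add_le _ _
        _ = 1 + ‖κ‖ := by rw [norm_one]; ring
    linarith
  refine hfinal1.trans ?_
  have hsum : B2 * L + B1 * L + C' * L = (B1 + B2 + C') * L := by ring
  rw [hsum]
  have hfin2 : (B1 + B2 + C') * L ≤ (B1 + B2 + C') * (CL * Real.log x ^ β) :=
    mul_le_mul_of_nonneg_left hLle (by linarith)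
  have hfin3 : (1 + ‖κ‖) * Real.log 2
      ≤ ((1 + ‖κ‖) * Real.log 2 / Real.log 2 ^ β) * Real.log x ^ β := by
    have h := mul_le_mul_of_nonneg_left hrpow
      (show 0 ≤ (1 + ‖κ‖) * Real.log 2 / Real.log 2 ^ β by positivity)
    calc (1 + ‖κ‖) * Real.log 2
        = ((1 + ‖κ‖) * Real.log 2 / Real.log 2 ^ β) * Real.log 2 ^ β :=
          (div_mul_cancel₀ _ hrpow0.ne').symm
      _ ≤ _ := h
  calc (B1 + B2 + C') * L + (1 + ‖κ‖) * Real.log 2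
      ≤ (B1 + B2 + C') * (CL * Real.log x ^ β)
        + ((1 + ‖κ‖) * Real.log 2 / Real.log 2 ^ β) * Real.log x ^ β := add_le_add hfin2 hfin3
    _ = ((B1 + B2 + C') * CL + (1 + ‖κ‖) * Real.log 2 / Real.log 2 ^ β)
          * Real.log x ^ β := by ring
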